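/- Under assumptions (A1)–(A3), the functional J(x) := ∫_0^T F(t, x_t, x'(t)) dt is of class C^1 on 𝔛, and for every x ∈ 𝔛 and h ∈ 𝔛, DJ(x)·h = ∫_0^T ( D_2F(t, x_t, x'(t))·h_t + D_3F(t, x_t, x'(t))·h'(t) ) dt. -/

import Mathlib

open Set MeasureTheory

def memX {n : ℕ} (T : ℝ) (x : ℝ → Fin n → ℝ) : Prop :=
  Continuous x ∧ DifferentiableOn ℝ x (Set.Icc 0 T) ∧
    ContinuousOn (derivWithin x (Set.Icc 0 T)) (Set.Icc 0 T)

noncomputable def Xnorm {n : ℕ} (r T : ℝ) (x : ℝ → Fin n → ℝ) : ℝ :=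
  (⨆ t : Set.Icc (-r) T, ‖x t‖) + ⨆ t : Set.Icc (0 : ℝ) T, ‖derivWithin x (Set.Icc 0 T) t‖

noncomputable def hist {n : ℕ} (r : ℝ) (x : ℝ → Fin n → ℝ) (hx : Continuous x) (t : ℝ) :
    C(Set.Icc (-r) (0 : ℝ), Fin n → ℝ) :=
  ⟨fun θ => x (t + θ.1), hx.comp (continuous_const.add continuous_subtype_val)⟩


/-- Uniform continuity of a map near a compact curve. -/
lemma key_unif {E' W : Type*} [PseudoMetricSpace E'] [SeminormedAddCommGroup W]
    {T : ℝ}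
    (G : ℝ × E' → W) (hG : ContinuousOn G (Set.Icc 0 T ×ˢ (Set.univ : Set E')))
    (c : ℝ → E') (hc : ContinuousOn c (Set.Icc 0 T)) {ε : ℝ} (hε : 0 < ε) :
    ∃ δ > 0, ∀ t ∈ Set.Icc (0:ℝ) T, ∀ e : E',
      dist e (c t) ≤ δ → ‖G (t, e) - G (t, c t)‖ ≤ ε := by
  simp only [← dist_eq_norm]
  set I := Set.Icc (0:ℝ) T
  have hrest : Continuous fun q : I => c q.1 := hc.restrict
  have h1 : Continuous fun p : I × E' => G (p.1.1, p.2) := by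
    apply hG.comp_continuous
    · exact ((continuous_subtype_val.comp continuous_fst).prodMk continuous_snd)
    · intro p; exact Set.mem_prod.2 ⟨p.1.2, Set.mem_univ _⟩
  have h2 : Continuous fun p : I × E' => G (p.1.1, c p.1.1) := by
    apply hG.comp_continuous
    · exact ((continuous_subtype_val.comp continuous_fst).prodMk (hrest.comp continuous_fst))
    · intro p; exact Set.mem_prod.2 ⟨p.1.2, Set.mem_univ _⟩
  have hΦ : Continuous fun p : I × E' => dist (G (p.1.1, p.2)) (G (p.1.1, c p.1.1)) :=
    h1.dist h2
  set K : Set (I × E') := Set.range (fun t : I => ((t, c t.1) : I × E')) with hK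
  have hKc : IsCompact K := isCompact_range (continuous_id.prodMk hrest)
  have hU : IsOpen ((fun p : I × E' => dist (G (p.1.1, p.2)) (G (p.1.1, c p.1.1))) ⁻¹' Set.Iio ε) :=
    hΦ.isOpen_preimage _ isOpen_Iio
  have hKU : K ⊆ (fun p : I × E' => dist (G (p.1.1, p.2)) (G (p.1.1, c p.1.1))) ⁻¹' Set.Iio ε := by
    rintro p ⟨t, rfl⟩
    simp [dist_self, hε]
  obtain ⟨δ, hδ, hsub⟩ := hKc.exists_thickening_subset_open hU hKU
  refine ⟨δ/2, by positivity, ?_⟩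
  intro t ht e he
  have hmem : ((⟨t, ht⟩, e) : I × E') ∈ Metric.thickening δ K := by
    refine Metric.mem_thickening_iff.2 ⟨(⟨t, ht⟩, c t), ⟨⟨t, ht⟩, rfl⟩, ?_⟩
    have : dist ((⟨t, ht⟩, e) : I × E') (⟨t, ht⟩, c t) = max (dist (⟨t,ht⟩ : I) ⟨t,ht⟩) (dist e (c t)) :=
      Prod.dist_eq
    rw [this, dist_self]
    have : max 0 (dist e (c t)) ≤ δ/2 := max_le (by positivity) he
    linarith
  exact le_of_lt (hsub hmem)

/-- Mean value estimate for the first-order Taylor remainder. -/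
lemma mvt_gen {E : Type*} [NormedAddCommGroup E] [NormedSpace ℝ E]
    (G : E → ℝ) (D : E → (E →L[ℝ] ℝ)) (hG : ∀ ψ, HasFDerivAt G (D ψ) ψ)
    (φ η : E) (A : E →L[ℝ] ℝ) {C : ℝ}
    (hC : ∀ s ∈ Set.Icc (0:ℝ) 1, ‖D (φ + s • η) - A‖ ≤ C) :
    |G (φ + η) - G φ - A η| ≤ C * ‖η‖ := by
  have hline : ∀ s : ℝ, HasDerivAt (fun s : ℝ => φ + s • η) η s := by
    intro s
    have := ((hasDerivAt_id s).smul_const η).const_add φ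
    simpa using this
  have hf : ∀ s : ℝ, HasDerivAt (fun s : ℝ => G (φ + s • η) - A (s • η))
      (D (φ + s • η) η - A η) s := by
    intro s
    have h2 : HasDerivAt (fun s : ℝ => G (φ + s • η)) (D (φ + s • η) η) s :=
      (hG (φ + s • η)).comp_hasDerivAt s (hline s)
    have h3 : HasDerivAt (fun s : ℝ => A (s • η)) (A η) s := by
      have := A.hasFDerivAt.comp_hasDerivAt s ((hasDerivAt_id s).smul_const η)
      simp only [Function.comp_def, one_smul] at this
      exact this
    exact h2.sub h3
  have key := Convex.norm_image_sub_le_of_norm_hasDerivWithin_le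
    (f := fun s : ℝ => G (φ + s • η) - A (s • η))
    (f' := fun s : ℝ => D (φ + s • η) η - A η) (C := C * ‖η‖) (s := Set.Icc (0:ℝ) 1)
    (fun s _ => (hf s).hasDerivWithinAt)
    (fun s hs => by
      show ‖D (φ + s • η) η - A η‖ ≤ C * ‖η‖
      have : D (φ + s • η) η - A η = (D (φ + s • η) - A) η := by
        simp [ContinuousLinearMap.sub_apply]
      rw [Real.norm_eq_abs, this]
      calc |(D (φ + s • η) - A) η| ≤ ‖D (φ + s • η) - A‖ * ‖η‖ :=
            (D (φ + s • η) - A).le_opNorm η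
        _ ≤ C * ‖η‖ := mul_le_mul_of_nonneg_right (hC s hs) (norm_nonneg _))
    (convex_Icc 0 1) (Set.left_mem_Icc.2 zero_le_one) (Set.right_mem_Icc.2 zero_le_one)
  simpa [Real.norm_eq_abs, sub_sub, add_comm] using key

lemma hist_cont {n : ℕ} (r : ℝ) (x : ℝ → Fin n → ℝ) (hx : Continuous x) :
    Continuous (hist r x hx) := by
  have : hist r x hx = fun t => ContinuousMap.curry
      ⟨fun p : ℝ × Set.Icc (-r) (0:ℝ) => x (p.1 + p.2.1),
        hx.comp (continuous_fst.add (continuous_subtype_val.comp continuous_snd))⟩ t :=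
    funext fun t => ContinuousMap.ext fun θ => rfl
  rw [this]
  exact (ContinuousMap.curry _).continuous

lemma bdd_range_norm {E : Type*} [NormedAddCommGroup E] {a b : ℝ} {f : ℝ → E}
    (hf : ContinuousOn f (Set.Icc a b)) :
    BddAbove (Set.range fun s : Set.Icc a b => ‖f s‖) := by
  have : (Set.range fun s : Set.Icc a b => ‖f s‖) = (fun u => ‖f u‖) '' Set.Icc a b :=
    (Set.image_eq_range (fun u => ‖f u‖) (Set.Icc a b)).symm
  rw [this]
  exact (isCompact_Icc.image_of_continuousOn hf.norm).bddAbove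

lemma norm_hist_le_Xnorm {n : ℕ} {r T : ℝ} (hr : 0 < r) (h : ℝ → Fin n → ℝ)
    (hh : Continuous h) {t : ℝ} (ht : t ∈ Set.Icc (0:ℝ) T) :
    ‖hist r h hh t‖ ≤ Xnorm r T h := by
  have hbdd : BddAbove (Set.range fun s : Set.Icc (-r) T => ‖h s‖) :=
    bdd_range_norm hh.continuousOn
  have h1 : ‖hist r h hh t‖ ≤ ⨆ s : Set.Icc (-r) T, ‖h s‖ := by
    rw [ContinuousMap.norm_le _ (Real.iSup_nonneg fun _ => norm_nonneg _)]
    intro θ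
    exact le_ciSup hbdd ⟨t + θ.1, ⟨by linarith [θ.2.1, ht.1], by linarith [θ.2.2, ht.2]⟩⟩
  exact h1.trans (le_add_of_nonneg_right (Real.iSup_nonneg fun _ => norm_nonneg _))

lemma norm_deriv_le_Xnorm {n : ℕ} {r T : ℝ} (h : ℝ → Fin n → ℝ)
    (hh : ContinuousOn (derivWithin h (Set.Icc 0 T)) (Set.Icc 0 T)) {t : ℝ}
    (ht : t ∈ Set.Icc (0:ℝ) T) :
    ‖derivWithin h (Set.Icc 0 T) t‖ ≤ Xnorm r T h := by
  have h1 : ‖derivWithin h (Set.Icc 0 T) t‖ ≤ ⨆ s : Set.Icc (0:ℝ) T,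
      ‖derivWithin h (Set.Icc 0 T) s‖ := le_ciSup (bdd_range_norm hh) ⟨t, ht⟩
  exact h1.trans (le_add_of_nonneg_left (Real.iSup_nonneg fun _ => norm_nonneg _))

/-- The criterion `J(x) = ∫_0^T F(t, x_t, x'(t)) dt`. -/
noncomputable def Jfun {n : ℕ} (r T : ℝ)
    (F : ℝ → C(Set.Icc (-r) (0 : ℝ), Fin n → ℝ) → (Fin n → ℝ) → ℝ)
    (x : ℝ → Fin n → ℝ) (hx : Continuous x) : ℝ :=
  ∫ t in Set.Icc (0 : ℝ) T, F t (hist r x hx t) (derivWithin x (Set.Icc 0 T) t)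

/-- Under (A1)-(A3), `J(x) = ∫_0^T F(t,x_t,x'(t)) dt` is of class `C¹` on `X`, with
`DJ(x)·h = ∫_0^T ( D₂F(t,x_t,x'(t))·h_t + D₃F(t,x_t,x'(t))·h'(t) ) dt` :
`J` is Fréchet differentiable at each `x ∈ X` with this differential, and the
differential depends continuously on `x`. -/
theorem stmt_14 (r T : ℝ) (hr : 0 < r) (hrT : r < T) (n : ℕ)
    (F : ℝ → C(Set.Icc (-r) (0 : ℝ), Fin n → ℝ) → (Fin n → ℝ) → ℝ)
    -- (A1)
    (hF : ContinuousOn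
      (fun p : ℝ × C(Set.Icc (-r) (0 : ℝ), Fin n → ℝ) × (Fin n → ℝ) => F p.1 p.2.1 p.2.2)
      (Set.Icc 0 T ×ˢ Set.univ))
    -- (A2)
    (D₂F : ℝ → C(Set.Icc (-r) (0 : ℝ), Fin n → ℝ) → (Fin n → ℝ) →
      (C(Set.Icc (-r) (0 : ℝ), Fin n → ℝ) →L[ℝ] ℝ))
    (hD₂ : ∀ t ∈ Set.Icc (0 : ℝ) T, ∀ φ v, HasFDerivAt (fun ψ => F t ψ v) (D₂F t φ v) φ)
    (hD₂c : ContinuousOn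
      (fun p : ℝ × C(Set.Icc (-r) (0 : ℝ), Fin n → ℝ) × (Fin n → ℝ) => D₂F p.1 p.2.1 p.2.2)
      (Set.Icc 0 T ×ˢ Set.univ))
    -- (A3)
    (D₃F : ℝ → C(Set.Icc (-r) (0 : ℝ), Fin n → ℝ) → (Fin n → ℝ) → ((Fin n → ℝ) →L[ℝ] ℝ))
    (hD₃ : ∀ t ∈ Set.Icc (0 : ℝ) T, ∀ φ v, HasFDerivAt (fun w => F t φ w) (D₃F t φ v) v)
    (hD₃c : ContinuousOn
      (fun p : ℝ × C(Set.Icc (-r) (0 : ℝ), Fin n → ℝ) × (Fin n → ℝ) => D₃F p.1 p.2.1 p.2.2)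
      (Set.Icc 0 T ×ˢ Set.univ)) :
    -- Fréchet differentiability of J at every x ∈ X, with the announced differential
    (∀ (x : ℝ → Fin n → ℝ) (hx : memX T x), ∀ ε > (0 : ℝ), ∃ δ > (0 : ℝ),
      ∀ (h : ℝ → Fin n → ℝ) (hh : memX T h), Xnorm r T h ≤ δ →
        |Jfun r T F (fun t => x t + h t) (hx.1.add hh.1) - Jfun r T F x hx.1 -
          ∫ t in Set.Icc (0 : ℝ) T,
            (D₂F t (hist r x hx.1 t) (derivWithin x (Set.Icc 0 T) t) (hist r h hh.1 t) +
             D₃F t (hist r x hx.1 t) (derivWithin x (Set.Icc 0 T) t)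
               (derivWithin h (Set.Icc 0 T) t))| ≤ ε * Xnorm r T h) ∧
    -- continuity of x ↦ DJ(x) in the operator norm sense
    (∀ (x : ℝ → Fin n → ℝ) (hx : memX T x), ∀ ε > (0 : ℝ), ∃ δ > (0 : ℝ),
      ∀ (y : ℝ → Fin n → ℝ) (hy : memX T y), Xnorm r T (fun t => y t - x t) ≤ δ →
        ∀ (h : ℝ → Fin n → ℝ) (hh : memX T h),
          |(∫ t in Set.Icc (0 : ℝ) T,
              (D₂F t (hist r y hy.1 t) (derivWithin y (Set.Icc 0 T) t) (hist r h hh.1 t) +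
               D₃F t (hist r y hy.1 t) (derivWithin y (Set.Icc 0 T) t)
                 (derivWithin h (Set.Icc 0 T) t))) -
            ∫ t in Set.Icc (0 : ℝ) T,
              (D₂F t (hist r x hx.1 t) (derivWithin x (Set.Icc 0 T) t) (hist r h hh.1 t) +
               D₃F t (hist r x hx.1 t) (derivWithin x (Set.Icc 0 T) t)
                 (derivWithin h (Set.Icc 0 T) t))| ≤ ε * Xnorm r T h) := by
  have hT : 0 < T := hr.trans hrT
  set I := Set.Icc (0:ℝ) T with hI
  have hUD : UniqueDiffOn ℝ I := uniqueDiffOn_Icc hT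
  have curve : ∀ (y : ℝ → Fin n → ℝ) (hy : memX T y),
      ContinuousOn (fun t => ((t, hist r y hy.1 t, derivWithin y I t) :
        ℝ × C(Set.Icc (-r) (0:ℝ), Fin n → ℝ) × (Fin n → ℝ))) I :=
    fun y hy => continuousOn_id.prodMk (((hist_cont r y hy.1).continuousOn).prodMk hy.2.2)
  have maps : ∀ (y : ℝ → Fin n → ℝ) (hy : memX T y),
      Set.MapsTo (fun t => ((t, hist r y hy.1 t, derivWithin y I t) :
        ℝ × C(Set.Icc (-r) (0:ℝ), Fin n → ℝ) × (Fin n → ℝ))) I (I ×ˢ Set.univ) :=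
    fun y hy t ht => Set.mem_prod.2 ⟨ht, Set.mem_univ _⟩
  have intF : ∀ (y : ℝ → Fin n → ℝ) (hy : memX T y),
      IntegrableOn (fun t => F t (hist r y hy.1 t) (derivWithin y I t)) I volume :=
    fun y hy => ((hF.comp (curve y hy) (maps y hy)).integrableOn_compact isCompact_Icc)
  have intL : ∀ (y : ℝ → Fin n → ℝ) (hy : memX T y) (h : ℝ → Fin n → ℝ) (hh : memX T h),
      IntegrableOn (fun t => D₂F t (hist r y hy.1 t) (derivWithin y I t) (hist r h hh.1 t)
        + D₃F t (hist r y hy.1 t) (derivWithin y I t) (derivWithin h I t)) I volume := by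
    intro y hy h hh
    apply ContinuousOn.integrableOn_compact isCompact_Icc
    exact (((hD₂c.comp (curve y hy) (maps y hy)).clm_apply (hist_cont r h hh.1).continuousOn).add
      ((hD₃c.comp (curve y hy) (maps y hy)).clm_apply hh.2.2))
  have volI : (volume I).toReal = T := by
    rw [hI, Real.volume_Icc, sub_zero, ENNReal.toReal_ofReal hT.le]
  have volIlt : volume I < ⊤ := by rw [hI, Real.volume_Icc]; exact ENNReal.ofReal_lt_top
  constructor
  · -- Part 1 : differentiability
    intro x hx ε hε
    have hε' : 0 < ε / (2 * T) := by positivity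
    set c : ℝ → C(Set.Icc (-r) (0:ℝ), Fin n → ℝ) × (Fin n → ℝ) :=
      fun t => (hist r x hx.1 t, derivWithin x I t) with hc
    have hcc : ContinuousOn c I := ((hist_cont r x hx.1).continuousOn).prodMk hx.2.2
    obtain ⟨δ₂, hδ₂, H₂⟩ := key_unif (W := C(Set.Icc (-r) (0:ℝ), Fin n → ℝ) →L[ℝ] ℝ)
      _ hD₂c c hcc hε'
    obtain ⟨δ₃, hδ₃, H₃⟩ := key_unif (W := (Fin n → ℝ) →L[ℝ] ℝ) _ hD₃c c hcc hε'
    refine ⟨min δ₂ δ₃, lt_min hδ₂ hδ₃, ?_⟩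
    intro h hh hXh
    have hηle : ∀ t ∈ I, ‖hist r h hh.1 t‖ ≤ Xnorm r T h :=
      fun t ht => norm_hist_le_Xnorm hr h hh.1 ht
    have hwle : ∀ t ∈ I, ‖derivWithin h I t‖ ≤ Xnorm r T h :=
      fun t ht => norm_deriv_le_Xnorm h hh.2.2 ht
    have hpt : ∀ t ∈ I,
        |F t (hist r x hx.1 t + hist r h hh.1 t) (derivWithin x I t + derivWithin h I t)
          - F t (hist r x hx.1 t) (derivWithin x I t)
          - (D₂F t (hist r x hx.1 t) (derivWithin x I t) (hist r h hh.1 t)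
             + D₃F t (hist r x hx.1 t) (derivWithin x I t) (derivWithin h I t))|
        ≤ ε / (2*T) * (2 * Xnorm r T h) := by
      intro t ht
      set φ := hist r x hx.1 t with hφ
      set η := hist r h hh.1 t with hη
      set v := derivWithin x I t with hv
      set w := derivWithin h I t with hw
      have hηX : ‖η‖ ≤ Xnorm r T h := hηle t ht
      have hwX : ‖w‖ ≤ Xnorm r T h := hwle t ht
      have step1 : |F t (φ + η) (v + w) - F t φ (v + w) - D₂F t φ v η| ≤ ε/(2*T) * ‖η‖ := by
        apply mvt_gen (fun ψ => F t ψ (v + w)) (fun ψ => D₂F t ψ (v + w))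
          (fun ψ => hD₂ t ht ψ (v+w)) φ η (D₂F t φ v)
        intro s hs
        have h1 : ‖s • η‖ ≤ min δ₂ δ₃ := by
          have e : ‖s • η‖ = ‖s‖ * ‖η‖ := norm_smul s η
          have hs1 : ‖s‖ ≤ 1 := by rw [Real.norm_eq_abs]; exact abs_le.2 ⟨by linarith [hs.1], hs.2⟩
          rw [e]
          calc ‖s‖ * ‖η‖ ≤ 1 * ‖η‖ := mul_le_mul_of_nonneg_right hs1 (norm_nonneg _)
            _ = ‖η‖ := one_mul _
            _ ≤ _ := hηX.trans hXh
        have h2 : ‖w‖ ≤ min δ₂ δ₃ := hwX.trans hXh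
        have hd : dist ((φ + s • η, v + w)) (c t) ≤ δ₂ := by
          have hct : c t = (φ, v) := rfl
          rw [hct, Prod.dist_eq]
          simp only [dist_eq_norm, add_sub_cancel_left]
          exact max_le (h1.trans (min_le_left _ _)) (h2.trans (min_le_left _ _))
        exact H₂ t ht (φ + s • η, v + w) hd
      have step2 : |F t φ (v + w) - F t φ v - D₃F t φ v w| ≤ ε/(2*T) * ‖w‖ := by
        apply mvt_gen (fun u => F t φ u) (fun u => D₃F t φ u)
          (fun u => hD₃ t ht φ u) v w (D₃F t φ v)
        intro s hs
        have h1 : ‖s • w‖ ≤ min δ₂ δ₃ := by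
          have e : ‖s • w‖ = ‖s‖ * ‖w‖ := norm_smul s w
          have hs1 : ‖s‖ ≤ 1 := by rw [Real.norm_eq_abs]; exact abs_le.2 ⟨by linarith [hs.1], hs.2⟩
          rw [e]
          calc ‖s‖ * ‖w‖ ≤ 1 * ‖w‖ := mul_le_mul_of_nonneg_right hs1 (norm_nonneg _)
            _ = ‖w‖ := one_mul _
            _ ≤ _ := hwX.trans hXh
        have hd : dist ((φ, v + s • w)) (c t) ≤ δ₃ := by
          have hct : c t = (φ, v) := rfl
          rw [hct, Prod.dist_eq]
          simp only [dist_eq_norm, add_sub_cancel_left, sub_self, norm_zero]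
          exact max_le (by positivity) (h1.trans (min_le_right _ _))
        exact H₃ t ht (φ, v + s • w) hd
      have comb : F t (φ + η) (v + w) - F t φ v - (D₂F t φ v η + D₃F t φ v w)
          = (F t (φ + η) (v + w) - F t φ (v + w) - D₂F t φ v η)
            + (F t φ (v + w) - F t φ v - D₃F t φ v w) := by ring
      rw [comb]
      refine (abs_add_le _ _).trans ?_
      refine (add_le_add step1 step2).trans ?_
      nlinarith [hε'.le, hηX, hwX]
    have hxh : memX T (fun s => x s + h s) :=
      ⟨hx.1.add hh.1, hx.2.1.add hh.2.1,
        (hx.2.2.add hh.2.2).congr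
          (fun t ht => derivWithin_add (hx.2.1 t ht) (hh.2.1 t ht))⟩
    have hrw : ∀ t ∈ I,
        F t (hist r (fun s => x s + h s) (hx.1.add hh.1) t) (derivWithin (fun s => x s + h s) I t)
          = F t (hist r x hx.1 t + hist r h hh.1 t) (derivWithin x I t + derivWithin h I t) := by
      intro t ht
      have e1 : hist r (fun s => x s + h s) (hx.1.add hh.1) t
          = hist r x hx.1 t + hist r h hh.1 t := ContinuousMap.ext fun θ => rfl
      rw [e1, derivWithin_fun_add (hx.2.1 t ht) (hh.2.1 t ht)]
    have eInt : Jfun r T F (fun s => x s + h s) (hx.1.add hh.1) - Jfun r T F x hx.1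
        - (∫ t in I, (D₂F t (hist r x hx.1 t) (derivWithin x I t) (hist r h hh.1 t)
            + D₃F t (hist r x hx.1 t) (derivWithin x I t) (derivWithin h I t)))
        = ∫ t in I,
            (F t (hist r (fun s => x s + h s) (hx.1.add hh.1) t)
               (derivWithin (fun s => x s + h s) I t)
             - F t (hist r x hx.1 t) (derivWithin x I t)
             - (D₂F t (hist r x hx.1 t) (derivWithin x I t) (hist r h hh.1 t)
                + D₃F t (hist r x hx.1 t) (derivWithin x I t) (derivWithin h I t))) := by
      have intf1 : IntegrableOn (fun t =>
          F t (hist r (fun s => x s + h s) (hx.1.add hh.1) t)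
            (derivWithin (fun s => x s + h s) I t)) I volume := intF _ hxh
      have intf10 : IntegrableOn (fun t =>
          F t (hist r (fun s => x s + h s) (hx.1.add hh.1) t)
            (derivWithin (fun s => x s + h s) I t)
          - F t (hist r x hx.1 t) (derivWithin x I t)) I volume := intf1.sub (intF x hx)
      rw [Jfun, Jfun, ← integral_sub intf1 (intF x hx),
        ← integral_sub intf10 (intL x hx h hh)]
    rw [eInt]
    have bound := norm_setIntegral_le_of_norm_le_const (μ := volume) (s := I)
      (C := ε / (2*T) * (2 * Xnorm r T h)) volIlt
      (f := fun t =>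
        F t (hist r (fun s => x s + h s) (hx.1.add hh.1) t)
           (derivWithin (fun s => x s + h s) I t)
         - F t (hist r x hx.1 t) (derivWithin x I t)
         - (D₂F t (hist r x hx.1 t) (derivWithin x I t) (hist r h hh.1 t)
            + D₃F t (hist r x hx.1 t) (derivWithin x I t) (derivWithin h I t)))
      (fun t ht => by simp only [Real.norm_eq_abs, hrw t ht]; exact hpt t ht)
    rw [measureReal_def, volI] at bound
    rw [← Real.norm_eq_abs]
    refine bound.trans (le_of_eq ?_)
    field_simp
  · -- Part 2 : continuity of the differential
    intro x hx ε hε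
    have hε' : 0 < ε / (2 * T) := by positivity
    set c : ℝ → C(Set.Icc (-r) (0:ℝ), Fin n → ℝ) × (Fin n → ℝ) :=
      fun t => (hist r x hx.1 t, derivWithin x I t) with hc
    have hcc : ContinuousOn c I := ((hist_cont r x hx.1).continuousOn).prodMk hx.2.2
    obtain ⟨δ₂, hδ₂, H₂⟩ := key_unif (W := C(Set.Icc (-r) (0:ℝ), Fin n → ℝ) →L[ℝ] ℝ)
      _ hD₂c c hcc hε'
    obtain ⟨δ₃, hδ₃, H₃⟩ := key_unif (W := (Fin n → ℝ) →L[ℝ] ℝ) _ hD₃c c hcc hε'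
    refine ⟨min δ₂ δ₃, lt_min hδ₂ hδ₃, ?_⟩
    intro y hy hXyx h hh
    have hdiffsub : ∀ t ∈ I, derivWithin (fun s => y s - x s) I t
        = derivWithin y I t - derivWithin x I t :=
      fun t ht => derivWithin_sub (hy.2.1 t ht) (hx.2.1 t ht)
    have hyx : memX T (fun s => y s - x s) :=
      ⟨hy.1.sub hx.1, hy.2.1.sub hx.2.1, (hy.2.2.sub hx.2.2).congr hdiffsub⟩
    have hdist : ∀ t ∈ I,
        dist ((hist r y hy.1 t, derivWithin y I t)) (c t) ≤ min δ₂ δ₃ := by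
      intro t ht
      have e1 : hist r y hy.1 t - hist r x hx.1 t
          = hist r (fun s => y s - x s) (hy.1.sub hx.1) t := ContinuousMap.ext fun θ => rfl
      have b1 : ‖hist r y hy.1 t - hist r x hx.1 t‖ ≤ Xnorm r T (fun s => y s - x s) := by
        rw [e1]; exact norm_hist_le_Xnorm hr _ _ ht
      have b2 : ‖derivWithin y I t - derivWithin x I t‖ ≤ Xnorm r T (fun s => y s - x s) := by
        rw [← hdiffsub t ht]; exact norm_deriv_le_Xnorm _ hyx.2.2 ht
      have hct : c t = (hist r x hx.1 t, derivWithin x I t) := rfl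
      rw [hct, Prod.dist_eq]
      simp only [dist_eq_norm]
      exact max_le (b1.trans hXyx) (b2.trans hXyx)
    have hηle : ∀ t ∈ I, ‖hist r h hh.1 t‖ ≤ Xnorm r T h :=
      fun t ht => norm_hist_le_Xnorm hr h hh.1 ht
    have hwle : ∀ t ∈ I, ‖derivWithin h I t‖ ≤ Xnorm r T h :=
      fun t ht => norm_deriv_le_Xnorm h hh.2.2 ht
    have hpt2 : ∀ t ∈ I,
        |(D₂F t (hist r y hy.1 t) (derivWithin y I t) (hist r h hh.1 t)
           + D₃F t (hist r y hy.1 t) (derivWithin y I t) (derivWithin h I t))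
         - (D₂F t (hist r x hx.1 t) (derivWithin x I t) (hist r h hh.1 t)
           + D₃F t (hist r x hx.1 t) (derivWithin x I t) (derivWithin h I t))|
        ≤ ε / (2*T) * (2 * Xnorm r T h) := by
      intro t ht
      have k2 := H₂ t ht (hist r y hy.1 t, derivWithin y I t) ((hdist t ht).trans (min_le_left _ _))
      have k3 := H₃ t ht (hist r y hy.1 t, derivWithin y I t) ((hdist t ht).trans (min_le_right _ _))
      have e : (D₂F t (hist r y hy.1 t) (derivWithin y I t) (hist r h hh.1 t)
           + D₃F t (hist r y hy.1 t) (derivWithin y I t) (derivWithin h I t))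
         - (D₂F t (hist r x hx.1 t) (derivWithin x I t) (hist r h hh.1 t)
           + D₃F t (hist r x hx.1 t) (derivWithin x I t) (derivWithin h I t))
         = (D₂F t (hist r y hy.1 t) (derivWithin y I t)
            - D₂F t (hist r x hx.1 t) (derivWithin x I t)) (hist r h hh.1 t)
           + (D₃F t (hist r y hy.1 t) (derivWithin y I t)
            - D₃F t (hist r x hx.1 t) (derivWithin x I t)) (derivWithin h I t) := by
        simp only [ContinuousLinearMap.sub_apply]; ring
      rw [e]
      have c2 : ‖(D₂F t (hist r y hy.1 t) (derivWithin y I t)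
            - D₂F t (hist r x hx.1 t) (derivWithin x I t)) (hist r h hh.1 t)‖
          ≤ (ε / (2*T)) * Xnorm r T h := by
        refine (ContinuousLinearMap.le_opNorm _ _).trans ?_
        exact mul_le_mul k2 (hηle t ht) (norm_nonneg _) hε'.le
      have c3 : ‖(D₃F t (hist r y hy.1 t) (derivWithin y I t)
            - D₃F t (hist r x hx.1 t) (derivWithin x I t)) (derivWithin h I t)‖
          ≤ (ε / (2*T)) * Xnorm r T h := by
        refine (ContinuousLinearMap.le_opNorm _ _).trans ?_
        exact mul_le_mul k3 (hwle t ht) (norm_nonneg _) hε'.le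
      refine (abs_add_le _ _).trans ?_
      rw [← Real.norm_eq_abs, ← Real.norm_eq_abs]
      refine (add_le_add c2 c3).trans (le_of_eq (by ring))
    rw [← integral_sub (intL y hy h hh) (intL x hx h hh)]
    have bound := norm_setIntegral_le_of_norm_le_const (μ := volume) (s := I)
      (C := ε / (2*T) * (2 * Xnorm r T h)) volIlt
      (f := fun t =>
        (D₂F t (hist r y hy.1 t) (derivWithin y I t) (hist r h hh.1 t)
           + D₃F t (hist r y hy.1 t) (derivWithin y I t) (derivWithin h I t))
         - (D₂F t (hist r x hx.1 t) (derivWithin x I t) (hist r h hh.1 t)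
           + D₃F t (hist r x hx.1 t) (derivWithin x I t) (derivWithin h I t)))
      (fun t ht => by simp only [Real.norm_eq_abs]; exact hpt2 t ht)
    rw [measureReal_def, volI] at bound
    rw [← Real.norm_eq_abs]
    refine bound.trans (le_of_eq ?_)
    field_simp
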